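/- Let I be a finite nonempty set and let a : I × I → ℝ be a nonnegative matrix which is primitive, i.e. there exists L ≥ 1 such that all entries of the matrix power a^L are strictly positive. Then there exists a unique pair (λ, μ) where λ > 0 and μ is a probability vector on I (μ(i) ≥ 0, ∑ μ(i) = 1) satisfying A*μ = λ·μ, where (A*μ)(i) = ∑_j a(j,i)·μ(j). -/

import Mathlib

open Finset

section PFaux

variable {I : Type*} [Fintype I] [DecidableEq I] [Nonempty I]

/-- maximum column sum -/
noncomputable def colMax (m : Matrix I I ℝ) : ℝ :=
  univ.sup' univ_nonempty (fun j => ∑ i, m i j)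

lemma mulVec_apply' (m : Matrix I I ℝ) (v : I → ℝ) (i : I) :
    m.mulVec v i = ∑ j, m i j * v j := rfl

lemma t_le_colMax (m : Matrix I I ℝ) (hnn : ∀ i j, 0 ≤ m i j) {t : ℝ} {μ : I → ℝ}
    (hμ : μ ∈ stdSimplex ℝ I) (h : ∀ i, t * μ i ≤ m.mulVec μ i) : t ≤ colMax m := by
  have h1 : t = ∑ i, t * μ i := by rw [← Finset.mul_sum, hμ.2, mul_one]
  calc t = ∑ i, t * μ i := h1
    _ ≤ ∑ i, m.mulVec μ i := Finset.sum_le_sum (fun i _ => h i)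
    _ = ∑ j, (∑ i, m i j) * μ j := by
        simp only [mulVec_apply']
        rw [Finset.sum_comm]
        simp [Finset.sum_mul]
    _ ≤ ∑ j, colMax m * μ j := by
        refine Finset.sum_le_sum (fun j _ => ?_)
        exact mul_le_mul_of_nonneg_right
          (Finset.le_sup' (fun j => ∑ i, m i j) (Finset.mem_univ j)) (hμ.1 j)
    _ = colMax m := by rw [← Finset.mul_sum, hμ.2, mul_one]

lemma pow_eig (m : Matrix I I ℝ) {μ : I → ℝ} {l : ℝ} (h : m.mulVec μ = l • μ) (n : ℕ) :
    (m ^ n).mulVec μ = l ^ n • μ := by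
  induction n with
  | zero => simp [Matrix.one_mulVec]
  | succ n ih =>
      rw [pow_succ, ← Matrix.mulVec_mulVec, h, Matrix.mulVec_smul, ih, smul_smul, pow_succ,
        mul_comm]

lemma exists_pos_coord {μ : I → ℝ} (hμ : μ ∈ stdSimplex ℝ I) : ∃ j, 0 < μ j := by
  by_contra h
  push_neg at h
  have : ∑ i, μ i = 0 := le_antisymm (Finset.sum_nonpos (fun i _ => h i))
    (Finset.sum_nonneg (fun i _ => hμ.1 i))
  rw [hμ.2] at this
  norm_num at this

lemma eigvec_pos (m : Matrix I I ℝ) {L : ℕ} (hpos : ∀ i j, 0 < (m ^ L) i j)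
    {μ : I → ℝ} {l : ℝ} (hμ : μ ∈ stdSimplex ℝ I) (h : m.mulVec μ = l • μ) (hl : 0 < l) :
    ∀ i, 0 < μ i := by
  intro i
  have hL := pow_eig m h L
  have h1 : l ^ L * μ i = ∑ j, (m ^ L) i j * μ j := by
    have := congrFun hL i
    simp only [Pi.smul_apply, smul_eq_mul] at this
    rw [← this, mulVec_apply']
  obtain ⟨j₀, hj₀⟩ := exists_pos_coord hμ
  have hsum : 0 < ∑ j, (m ^ L) i j * μ j :=
    Finset.sum_pos' (fun j _ => mul_nonneg (hpos i j).le (hμ.1 j))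
      ⟨j₀, Finset.mem_univ _, mul_pos (hpos i j₀) hj₀⟩
  have hlL : 0 < l ^ L := pow_pos hl L
  nlinarith [hsum, h1]

/-- Existence of a positive eigenvalue with a probability eigenvector. -/
lemma exists_eig (m : Matrix I I ℝ) (hnn : ∀ i j, 0 ≤ m i j) (L : ℕ) (hL : 1 ≤ L)
    (hpos : ∀ i j, 0 < (m ^ L) i j) :
    ∃ l : ℝ, 0 < l ∧ ∃ μ, μ ∈ stdSimplex ℝ I ∧ m.mulVec μ = l • μ := by
  classical
  -- no zero rows
  have hrow : ∀ i, 0 < ∑ j, m i j := by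
    intro i
    rcases (Finset.sum_nonneg (fun j _ => hnn i j)).lt_or_eq with h | h
    · exact h
    obtain ⟨L', rfl⟩ : ∃ L', L = L' + 1 := ⟨L - 1, (Nat.succ_pred_eq_of_pos hL).symm⟩
    have hz : ∀ j, m i j = 0 := by
      intro j
      have := (Finset.sum_eq_zero_iff_of_nonneg (fun j _ => hnn i j)).1 h.symm j (Finset.mem_univ j)
      exact this
    have : (m ^ (L' + 1)) i i = 0 := by
      rw [pow_succ']
      have : (m * m ^ L') i i = ∑ j, m i j * (m ^ L') j i := rfl
      rw [this]
      exact Finset.sum_eq_zero (fun j _ => by rw [hz j, zero_mul])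
    exact absurd this (hpos i i).ne'
  -- the compact Collatz–Wielandt set
  set K : Set (ℝ × (I → ℝ)) :=
    (Set.Icc (0 : ℝ) (colMax m) ×ˢ stdSimplex ℝ I) ∩
      ⋂ i, {p : ℝ × (I → ℝ) | p.1 * p.2 i ≤ m.mulVec p.2 i} with hK
  have hKmem : ∀ p : ℝ × (I → ℝ), p ∈ K ↔
      (p.1 ∈ Set.Icc (0 : ℝ) (colMax m) ∧ p.2 ∈ stdSimplex ℝ I) ∧
        ∀ i, p.1 * p.2 i ≤ m.mulVec p.2 i := by
    intro p
    simp [hK, Set.mem_iInter]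
  have hKcomp : IsCompact K := by
    refine ((isCompact_Icc).prod (isCompact_stdSimplex ℝ I)).inter_right ?_
    refine isClosed_iInter (fun i => isClosed_le ?_ ?_)
    · exact continuous_fst.mul ((continuous_apply i).comp continuous_snd)
    · simp only [mulVec_apply']
      exact continuous_finset_sum _ fun j _ =>
        continuous_const.mul ((continuous_apply j).comp continuous_snd)
  -- nonemptiness: uniform vector
  set n : ℝ := (Fintype.card I : ℝ) with hndef
  have hn : 0 < n := by
    rw [hndef]
    have : 0 < Fintype.card I := Fintype.card_pos
    exact_mod_cast this
  have hn1 : (1 : ℝ) ≤ n := by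
    rw [hndef]
    have : 1 ≤ Fintype.card I := Fintype.card_pos
    exact_mod_cast this
  set u : I → ℝ := fun _ => n⁻¹ with hu
  have huS : u ∈ stdSimplex ℝ I := by
    constructor
    · intro i; exact inv_nonneg.2 hn.le
    · rw [Finset.sum_const, Finset.card_univ, nsmul_eq_mul]
      exact mul_inv_cancel₀ hn.ne'
  set t₀ : ℝ := univ.inf' univ_nonempty (fun i => m.mulVec u i) with ht₀
  have ht₀pos : 0 < t₀ := by
    rw [ht₀]
    refine (Finset.lt_inf'_iff _).2 (fun i _ => ?_)
    rw [mulVec_apply']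
    have : ∑ j, m i j * u j = (∑ j, m i j) * n⁻¹ := by
      simp [u, Finset.sum_mul]
    rw [this]
    exact mul_pos (hrow i) (inv_pos.2 hn)
  have ht₀w : ∀ i, t₀ * u i ≤ m.mulVec u i := by
    intro i
    have h1 : t₀ ≤ m.mulVec u i := Finset.inf'_le _ (Finset.mem_univ i)
    have hui : u i = n⁻¹ := rfl
    rw [hui]
    nlinarith [inv_pos.2 hn, mul_inv_cancel₀ hn.ne']
  have ht₀K : (t₀, u) ∈ K := by
    rw [hKmem]
    exact ⟨⟨⟨ht₀pos.le, t_le_colMax m hnn huS ht₀w⟩, huS⟩, ht₀w⟩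
  -- maximize the first coordinate
  obtain ⟨p, hpK, hmax⟩ := hKcomp.exists_isMaxOn ⟨_, ht₀K⟩ continuous_fst.continuousOn
  rw [hKmem] at hpK
  obtain ⟨⟨_, hμS⟩, hineq⟩ := hpK
  set l := p.1
  set μ := p.2
  have hlt₀ : t₀ ≤ l := hmax ht₀K
  have hlpos : 0 < l := ht₀pos.trans_le hlt₀
  refine ⟨l, hlpos, μ, hμS, ?_⟩
  funext i
  by_contra hne
  have hik : l * μ i < m.mulVec μ i := lt_of_le_of_ne (hineq i) (fun h => hne (by
    simp only [Pi.smul_apply, smul_eq_mul]; exact h.symm))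
  -- build a strictly better point
  set w : I → ℝ := (m ^ L).mulVec μ with hw
  obtain ⟨j₀, hj₀⟩ := exists_pos_coord hμS
  have hwpos : ∀ i, 0 < w i := by
    intro i'
    rw [hw, mulVec_apply']
    exact Finset.sum_pos' (fun j _ => mul_nonneg (hpos i' j).le (hμS.1 j))
      ⟨j₀, Finset.mem_univ _, mul_pos (hpos i' j₀) hj₀⟩
  have hkey : ∀ i', m.mulVec w i' = l * w i' + ∑ j, (m ^ L) i' j * (m.mulVec μ j - l * μ j) := by
    intro i'
    have hcomm : m * m ^ L = m ^ L * m := (Commute.pow_right (Commute.refl m) L).eq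
    have h1 : m.mulVec w = (m ^ L).mulVec (m.mulVec μ) := by
      rw [hw, Matrix.mulVec_mulVec, hcomm, ← Matrix.mulVec_mulVec]
    rw [h1, mulVec_apply']
    have h2 : l * w i' = ∑ j, l * ((m ^ L) i' j * μ j) := by
      rw [hw, mulVec_apply', Finset.mul_sum]
    rw [h2, ← Finset.sum_add_distrib]
    refine Finset.sum_congr rfl (fun j _ => by ring)
  have hstrict : ∀ i', l * w i' < m.mulVec w i' := by
    intro i'
    rw [hkey i']
    have hpos' : 0 < ∑ j, (m ^ L) i' j * (m.mulVec μ j - l * μ j) :=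
      Finset.sum_pos' (fun j _ => mul_nonneg (hpos i' j).le (by linarith [hineq j]))
        ⟨i, Finset.mem_univ _, mul_pos (hpos i' i) (by linarith)⟩
    linarith
  set ε : ℝ := univ.inf' univ_nonempty (fun i' => (m.mulVec w i' - l * w i') / w i') with hε
  have hεpos : 0 < ε := by
    rw [hε]
    refine (Finset.lt_inf'_iff _).2 (fun i' _ => ?_)
    exact div_pos (by linarith [hstrict i']) (hwpos i')
  have hεle : ∀ i', (l + ε) * w i' ≤ m.mulVec w i' := by
    intro i'
    have h1 : ε ≤ (m.mulVec w i' - l * w i') / w i' := Finset.inf'_le _ (Finset.mem_univ i')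
    have h2 : ε * w i' ≤ m.mulVec w i' - l * w i' := by
      rw [← le_div_iff₀ (hwpos i')]
      exact h1
    nlinarith
  set s : ℝ := ∑ i', w i' with hs
  have hspos : 0 < s := Finset.sum_pos (fun i' _ => hwpos i') Finset.univ_nonempty
  set w' : I → ℝ := s⁻¹ • w with hw'
  have hw'S : w' ∈ stdSimplex ℝ I := by
    constructor
    · intro i'
      exact mul_nonneg (inv_nonneg.2 hspos.le) (hwpos i').le
    · simp only [hw', Pi.smul_apply, smul_eq_mul, ← Finset.mul_sum, ← hs]
      field_simp
  have hw'ineq : ∀ i', (l + ε) * w' i' ≤ m.mulVec w' i' := by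
    intro i'
    rw [hw', Matrix.mulVec_smul]
    simp only [Pi.smul_apply, smul_eq_mul]
    have := hεle i'
    have hinv : 0 ≤ s⁻¹ := inv_nonneg.2 hspos.le
    calc (l + ε) * (s⁻¹ * w i') = s⁻¹ * ((l + ε) * w i') := by ring
      _ ≤ s⁻¹ * m.mulVec w i' := mul_le_mul_of_nonneg_left this hinv
  have hmemK : ((l + ε, w') : ℝ × (I → ℝ)) ∈ K := by
    rw [hKmem]
    exact ⟨⟨⟨by positivity, t_le_colMax m hnn hw'S hw'ineq⟩, hw'S⟩, hw'ineq⟩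
  have hle : l + ε ≤ l := hmax hmemK
  linarith

/-- Uniqueness of the probability eigenvector for a given positive eigenvalue. -/
lemma vec_uniq (m : Matrix I I ℝ) {L : ℕ} (hpos : ∀ i j, 0 < (m ^ L) i j)
    {l : ℝ} {μ μ' : I → ℝ} (hl : 0 < l) (hμ : μ ∈ stdSimplex ℝ I) (hμ' : μ' ∈ stdSimplex ℝ I)
    (h : m.mulVec μ = l • μ) (h' : m.mulVec μ' = l • μ') : μ = μ' := by
  have hμpos := eigvec_pos m hpos hμ h hl
  have hμ'pos := eigvec_pos m hpos hμ' h' hl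
  set t : ℝ := univ.inf' univ_nonempty (fun k => μ' k / μ k) with ht
  obtain ⟨k₀, _, hk₀⟩ := Finset.exists_mem_eq_inf' (univ_nonempty) (fun k => μ' k / μ k)
  have hk₀' : t = μ' k₀ / μ k₀ := by rw [ht]; exact hk₀
  set ν : I → ℝ := μ' - t • μ with hν
  have hνnn : ∀ j, 0 ≤ ν j := by
    intro j
    have h1 : t ≤ μ' j / μ j := Finset.inf'_le _ (Finset.mem_univ j)
    have h2 : t * μ j ≤ μ' j := by
      rw [← le_div_iff₀ (hμpos j)]
      exact h1
    simp [hν]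
    linarith
  have hνk₀ : ν k₀ = 0 := by
    simp only [hν, Pi.sub_apply, Pi.smul_apply, smul_eq_mul, hk₀']
    rw [div_mul_cancel₀ _ (hμpos k₀).ne', sub_self]
  have hνeig : m.mulVec ν = l • ν := by
    rw [hν, Matrix.mulVec_sub, Matrix.mulVec_smul, h, h', smul_sub, smul_comm]
  have hL := pow_eig m hνeig L
  have h0 : ∑ j, (m ^ L) k₀ j * ν j = 0 := by
    have := congrFun hL k₀
    simp only [Pi.smul_apply, smul_eq_mul] at this
    rw [← mulVec_apply', this, hνk₀, mul_zero]
  have hνzero : ∀ j, ν j = 0 := by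
    intro j
    have := (Finset.sum_eq_zero_iff_of_nonneg
      (fun j _ => mul_nonneg (hpos k₀ j).le (hνnn j))).1 h0 j (Finset.mem_univ j)
    exact (mul_eq_zero.1 this).resolve_left (hpos k₀ j).ne'
  have hμ'eq : μ' = t • μ := by
    funext j
    have h0 := hνzero j
    simp only [hν, Pi.sub_apply, Pi.smul_apply, smul_eq_mul] at h0
    simp only [Pi.smul_apply, smul_eq_mul]
    linarith
  have ht1 : t = 1 := by
    have h1 : (1 : ℝ) = ∑ j, μ' j := hμ'.2.symm
    have h2 : ∑ j, μ' j = t * ∑ j, μ j := by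
      rw [hμ'eq, Finset.mul_sum]
      rfl
    rw [hμ.2, mul_one] at h2
    linarith
  rw [hμ'eq, ht1, one_smul]

end PFaux

/-- Perron–Frobenius theorem for the transpose of a primitive
nonnegative matrix: existence and uniqueness of a positive eigenvalue with a
probability eigenvector. -/
theorem stmt5 {I : Type*} [Fintype I] [DecidableEq I] [Nonempty I]
    (a : Matrix I I ℝ) (hnonneg : ∀ i j, 0 ≤ a i j)
    (hprim : ∃ L : ℕ, 1 ≤ L ∧ ∀ i j, 0 < (a ^ L) i j) :
    ∃! p : ℝ × (I → ℝ),
      0 < p.1 ∧ (∀ i, 0 ≤ p.2 i) ∧ (∑ i, p.2 i = 1) ∧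
      ∀ i, ∑ j, a j i * p.2 j = p.1 * p.2 i := by
  classical
  obtain ⟨L, hL, hapos⟩ := hprim
  set b : Matrix I I ℝ := a.transpose with hb
  have hbnn : ∀ i j, 0 ≤ b i j := fun i j => hnonneg j i
  have hbpow : ∀ i j, 0 < (b ^ L) i j := by
    intro i j
    rw [hb, ← Matrix.transpose_pow]
    exact hapos j i
  -- bridging lemma
  have hbridge : ∀ (l : ℝ) (μ : I → ℝ),
      ((∀ i, ∑ j, a j i * μ j = l * μ i) ↔ b.mulVec μ = l • μ) := by
    intro l μ
    constructor
    · intro h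
      funext i
      rw [mulVec_apply']
      simp only [Pi.smul_apply, smul_eq_mul]
      rw [← h i]
      rfl
    · intro h i
      have := congrFun h i
      rw [mulVec_apply'] at this
      simp only [Pi.smul_apply, smul_eq_mul] at this
      rw [← this]
      rfl
  -- existence for b
  obtain ⟨l₀, hl₀pos, μ₀, hμ₀S, hμ₀⟩ := exists_eig b hbnn L hL hbpow
  -- right eigenvector of b (i.e. eigenvector of a) for eigenvalue comparison
  obtain ⟨ρ, hρpos, v, hvS, hv⟩ := exists_eig a hnonneg L hL hapos
  have hvpos : ∀ i, 0 < v i := eigvec_pos a hapos hvS hv hρpos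
  -- any eigenvalue of b with a probability eigenvector equals ρ
  have heigval : ∀ (l : ℝ) (μ : I → ℝ), μ ∈ stdSimplex ℝ I → b.mulVec μ = l • μ → l = ρ := by
    intro l μ hμS hμeig
    have hdot : ∑ i, μ i * v i > 0 := by
      obtain ⟨j₀, hj₀⟩ := exists_pos_coord hμS
      exact Finset.sum_pos' (fun i _ => mul_nonneg (hμS.1 i) (hvpos i).le)
        ⟨j₀, Finset.mem_univ _, mul_pos hj₀ (hvpos j₀)⟩
    have hcalc : l * ∑ i, μ i * v i = ρ * ∑ i, μ i * v i := by
      have h1 : ∑ i, (b.mulVec μ i) * v i = ∑ j, μ j * (a.mulVec v j) := by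
        simp only [mulVec_apply', Finset.sum_mul, Finset.mul_sum]
        rw [Finset.sum_comm]
        refine Finset.sum_congr rfl (fun j _ => Finset.sum_congr rfl (fun i _ => ?_))
        simp only [hb, Matrix.transpose_apply]
        ring
      have h2 : ∑ i, (b.mulVec μ i) * v i = l * ∑ i, μ i * v i := by
        rw [hμeig]
        simp only [Pi.smul_apply, smul_eq_mul, Finset.mul_sum]
        exact Finset.sum_congr rfl (fun i _ => by ring)
      have h3 : ∑ j, μ j * (a.mulVec v j) = ρ * ∑ j, μ j * v j := by
        rw [hv]
        simp only [Pi.smul_apply, smul_eq_mul, Finset.mul_sum]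
        exact Finset.sum_congr rfl (fun j _ => by ring)
      rw [← h1, h2] at h3
      exact h3
    exact mul_right_cancel₀ (ne_of_gt hdot) hcalc
  refine ⟨(l₀, μ₀), ⟨hl₀pos, hμ₀S.1, hμ₀S.2, (hbridge l₀ μ₀).2 hμ₀⟩, ?_⟩
  rintro ⟨l, μ⟩ ⟨hlpos, hμnn, hμsum, heig⟩
  have hμS : μ ∈ stdSimplex ℝ I := ⟨hμnn, hμsum⟩
  have hμeig : b.mulVec μ = l • μ := (hbridge l μ).1 heig
  have hl : l = ρ := heigval l μ hμS hμeig
  have hl₀ : l₀ = ρ := heigval l₀ μ₀ hμ₀S hμ₀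
  have hll : l = l₀ := by rw [hl, hl₀]
  have hμ₀' : b.mulVec μ₀ = l • μ₀ := by rw [hll]; exact hμ₀
  have hμeq : μ = μ₀ := vec_uniq b hbpow hlpos hμS hμ₀S hμeig hμ₀'
  exact Prod.ext hll hμeq
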